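/- (Second-order photon efficiency of the BPSK Holevo capacity.) Let h(x) = -x ln x - (1-x) ln(1-x) (binary entropy in nats, 0 ln 0 = 0) and C∞(E) = h((1 + e^{-2E})/2). Then lim_{E → 0⁺} ( C∞(E) + E ln E - E ) / ( E² ln E ) = 1, i.e. C∞(E)/E = -ln E + 1 + E ln E + o(E ln E) nats per photon as E → 0⁺. -/

import Mathlib

open Filter Topology

noncomputable def uu (E : ℝ) : ℝ := (Real.exp (-(2*E)) - 1 + 2*E) / (2*E)
noncomputable def qq (E : ℝ) : ℝ := (1 - Real.exp (-(2*E))) / 2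

lemma uu_sub {E : ℝ} (hE : 0 < E) (hE' : E < 1/4) : |uu E - E| ≤ E^2 := by
  have h := Real.exp_bound (x := -(2*E)) (by rw [abs_of_nonpos (by linarith)]; linarith)
    (n := 3) (by norm_num)
  rw [abs_of_nonpos (by linarith : -(2*E) ≤ 0)] at h
  simp only [Finset.sum_range_succ, Finset.sum_range_zero] at h
  norm_num at h
  have hnum : |Real.exp (-(2*E)) - (1 - 2*E + 2*E^2)| ≤ 2*E^3 := by
    have : (2*E)^3 * (4 / 18 : ℝ) ≤ 2*E^3 := by nlinarith
    calc |Real.exp (-(2*E)) - (1 - 2*E + 2*E^2)| ≤ (2*E)^3 * (4/18) := by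
          convert h using 2 <;> ring
      _ ≤ 2*E^3 := this
  have heq : uu E - E = (Real.exp (-(2*E)) - (1 - 2*E + 2*E^2)) / (2*E) := by
    unfold uu; field_simp; ring
  rw [heq, abs_div, abs_of_pos (by linarith : (0:ℝ) < 2*E), div_le_iff₀ (by linarith)]
  calc |Real.exp (-(2*E)) - (1 - 2*E + 2*E^2)| ≤ 2*E^3 := hnum
    _ = E^2 * (2*E) := by ring

lemma uu_pos {E : ℝ} (hE : 0 < E) : 0 < uu E := by
  have h := Real.add_one_lt_exp (x := -(2*E)) (by intro h; nlinarith)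
  exact div_pos (by linarith) (by linarith)

lemma uu_le {E : ℝ} (hE : 0 < E) (hE' : E < 1/4) : uu E ≤ E + E^2 := by
  have := uu_sub hE hE'
  rw [abs_le] at this; linarith [this.2]

lemma qq_eq {E : ℝ} (hE : E ≠ 0) : qq E = E * (1 - uu E) := by
  unfold qq uu; field_simp; ring

lemma qq_pos {E : ℝ} (hE : 0 < E) : 0 < qq E := by
  have : Real.exp (-(2*E)) < 1 := by
    rw [Real.exp_lt_one_iff]; linarith
  unfold qq; linarith

lemma qq_le {E : ℝ} (hE : 0 < E) : qq E ≤ E := by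
  have h := Real.add_one_le_exp (-(2*E))
  unfold qq; linarith

-- tendsto of identity to 0 within Ioi
lemma tendsto_id_Ioi : Tendsto (fun E : ℝ => E) (𝓝[>] 0) (𝓝 0) :=
  tendsto_id.mono_left nhdsWithin_le_nhds

lemma mem_Ioo_ev : ∀ᶠ E in 𝓝[>] (0:ℝ), E ∈ Set.Ioo (0:ℝ) (1/4) :=
  Ioo_mem_nhdsGT_of_mem (by norm_num : (0:ℝ) ∈ Set.Ico (0:ℝ) (1/4))

lemma L_uE : Tendsto (fun E : ℝ => uu E / E) (𝓝[>] 0) (𝓝 1) := by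
  rw [show (1:ℝ) = 0 + 1 by norm_num]
  have : Tendsto (fun E : ℝ => uu E / E - 1) (𝓝[>] 0) (𝓝 0) := by
    apply squeeze_zero_norm' (a := fun E : ℝ => E)
    · filter_upwards [mem_Ioo_ev] with E hE
      obtain ⟨h1, h2⟩ := hE
      have : uu E / E - 1 = (uu E - E) / E := by field_simp
      rw [this, Real.norm_eq_abs, abs_div, abs_of_pos h1, div_le_iff₀ h1]
      calc |uu E - E| ≤ E^2 := uu_sub h1 h2
        _ = E * E := sq E
    · exact tendsto_id_Ioi
  simpa using this.add_const 1

lemma L_u0 : Tendsto uu (𝓝[>] 0) (𝓝 0) := by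
  apply squeeze_zero_norm' (a := fun E : ℝ => 4*E)
  · filter_upwards [mem_Ioo_ev] with E hE
    obtain ⟨h1, h2⟩ := hE
    have := uu_le h1 h2
    rw [Real.norm_eq_abs, abs_of_pos (uu_pos h1)]
    nlinarith
  · simpa using (tendsto_id_Ioi.const_mul (4:ℝ))

-- log Taylor bounds
lemma log_bd1 {t : ℝ} (h0 : 0 < t) (h1 : t ≤ 1/2) : |Real.log (1-t) / t + 1| ≤ 2*t := by
  have h := Real.abs_log_sub_add_sum_range_le (x := t)
    (by rw [abs_of_pos h0]; linarith) 1
  simp only [Finset.sum_range_one] at h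
  norm_num at h
  rw [abs_of_pos h0] at h
  have hb : t^2 / (1-t) ≤ 2*t^2 := by
    rw [div_le_iff₀ (by linarith)]; nlinarith
  have heq : Real.log (1-t) / t + 1 = (t + Real.log (1-t)) / t := by
    field_simp; ring
  rw [heq, abs_div, abs_of_pos h0, div_le_iff₀ h0]
  calc |t + Real.log (1-t)| ≤ t^2/(1-t) := h
    _ ≤ 2*t^2 := hb
    _ = 2*t*t := by ring

lemma log_bd2 {t : ℝ} (h0 : 0 < t) (h1 : t ≤ 1/2) :
    |(Real.log (1-t) + t) / t^2 + 1/2| ≤ 2*t := by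
  have h := Real.abs_log_sub_add_sum_range_le (x := t)
    (by rw [abs_of_pos h0]; linarith) 2
  simp only [Finset.sum_range_succ, Finset.sum_range_zero] at h
  norm_num at h
  rw [abs_of_pos h0] at h
  have hb : t^3 / (1-t) ≤ 2*t^3 := by
    rw [div_le_iff₀ (by linarith)]; nlinarith [pow_pos h0 3]
  have heq : (Real.log (1-t) + t) / t^2 + 1/2 = (t + t^2/2 + Real.log (1-t)) / t^2 := by
    field_simp; ring
  rw [heq, abs_div, abs_of_pos (by positivity : (0:ℝ) < t^2), div_le_iff₀ (by positivity)]
  calc |t + t^2/2 + Real.log (1-t)| ≤ t^3/(1-t) := h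
    _ ≤ 2*t^3 := hb
    _ = 2*t*t^2 := by ring

-- generic composed limits
lemma L_log1 {w : ℝ → ℝ} (hw : ∀ᶠ E in 𝓝[>] (0:ℝ), 0 < w E ∧ w E ≤ 2*E) :
    Tendsto (fun E => Real.log (1 - w E) / w E) (𝓝[>] 0) (𝓝 (-1)) := by
  have : Tendsto (fun E => Real.log (1 - w E) / w E + 1) (𝓝[>] 0) (𝓝 0) := by
    apply squeeze_zero_norm' (a := fun E : ℝ => 4*E)
    · filter_upwards [mem_Ioo_ev, hw] with E hE hwE
      obtain ⟨h1, h2⟩ := hE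
      obtain ⟨hw1, hw2⟩ := hwE
      have := log_bd1 hw1 (by linarith)
      rw [Real.norm_eq_abs]
      calc |Real.log (1 - w E) / w E + 1| ≤ 2 * w E := this
        _ ≤ 4*E := by linarith
    · simpa using (tendsto_id_Ioi.const_mul (4:ℝ))
  have h2 := this.sub_const 1
  simp only [add_sub_cancel_right] at h2
  convert h2 using 2; norm_num
lemma L_log2 {w : ℝ → ℝ} (hw : ∀ᶠ E in 𝓝[>] (0:ℝ), 0 < w E ∧ w E ≤ 2*E) :
    Tendsto (fun E => (Real.log (1 - w E) + w E) / (w E)^2) (𝓝[>] 0) (𝓝 (-(1/2))) := by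
  have : Tendsto (fun E => (Real.log (1 - w E) + w E) / (w E)^2 + 1/2) (𝓝[>] 0) (𝓝 0) := by
    apply squeeze_zero_norm' (a := fun E : ℝ => 4*E)
    · filter_upwards [mem_Ioo_ev, hw] with E hE hwE
      obtain ⟨h1, h2⟩ := hE
      obtain ⟨hw1, hw2⟩ := hwE
      have := log_bd2 hw1 (by linarith)
      rw [Real.norm_eq_abs]
      calc |(Real.log (1 - w E) + w E) / (w E)^2 + 1/2| ≤ 2 * w E := this
        _ ≤ 4*E := by linarith
    · simpa using (tendsto_id_Ioi.const_mul (4:ℝ))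
  have h2 := this.sub_const (1/2)
  simp only [add_sub_cancel_right] at h2
  convert h2 using 2; norm_num

lemma hw_uu : ∀ᶠ E in 𝓝[>] (0:ℝ), 0 < uu E ∧ uu E ≤ 2*E := by
  filter_upwards [mem_Ioo_ev] with E hE
  obtain ⟨h1, h2⟩ := hE
  exact ⟨uu_pos h1, by nlinarith [uu_le h1 h2]⟩

lemma hw_qq : ∀ᶠ E in 𝓝[>] (0:ℝ), 0 < qq E ∧ qq E ≤ 2*E := by
  filter_upwards [mem_Ioo_ev] with E hE
  exact ⟨qq_pos hE.1, by linarith [qq_le hE.1, hE.1.le]⟩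

lemma L_inv_log : Tendsto (fun E : ℝ => (Real.log E)⁻¹) (𝓝[>] 0) (𝓝 0) := by
  have h : Tendsto (fun E : ℝ => -Real.log E) (𝓝[>] 0) atTop :=
    tendsto_neg_atBot_atTop.comp Real.tendsto_log_nhdsGT_zero
  have h2 : Tendsto (fun E : ℝ => (-Real.log E)⁻¹) (𝓝[>] 0) (𝓝 0) := h.inv_tendsto_atTop
  have heq : (fun E : ℝ => (Real.log E)⁻¹) = fun E : ℝ => -(-Real.log E)⁻¹ := by
    funext E; rw [inv_neg, neg_neg]
  rw [heq]
  simpa using h2.neg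

lemma L_qE : Tendsto (fun E : ℝ => qq E / E) (𝓝[>] 0) (𝓝 1) := by
  have : Tendsto (fun E : ℝ => 1 - uu E) (𝓝[>] 0) (𝓝 1) := by
    simpa using (tendsto_const_nhds.sub L_u0)
  apply this.congr'
  filter_upwards [mem_Ioo_ev] with E hE
  rw [qq_eq (ne_of_gt hE.1), mul_comm, mul_div_assoc, div_self (ne_of_gt hE.1), mul_one]


lemma key_identity (E L a b u q : ℝ) (hE : E ≠ 0) (hL : L ≠ 0) (hu : u ≠ 0)
    (hq : q ≠ 0) (hqe : q = E * (1 - u)) :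
    u / E - ((1 - u) * (a / u) * (u / E)
        + ((b + q) / q ^ 2 * (q / E) ^ 2 - b / q * (q / E) ^ 2 + u / E)) * L⁻¹
      = (-(q * (L + a)) - (1 - q) * b + E * L - E) / (E ^ 2 * L) := by
  have h1u : (1 : ℝ) - u ≠ 0 := by
    intro h; apply hq; rw [hqe, h, mul_zero]
  subst hqe
  field_simp
  ring

theorem bpsk_holevo_photon_efficiency_second_order :
    Tendsto
      (fun E : ℝ =>
        (Real.binEntropy ((1 + Real.exp (-(2 * E))) / 2) + E * Real.log E - E)
          / (E ^ 2 * Real.log E))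
      (𝓝[>] 0) (𝓝 1) := by
  have hG : Tendsto
      (fun E : ℝ => uu E / E -
        ((1 - uu E) * (Real.log (1 - uu E) / uu E) * (uu E / E)
          + ( ((Real.log (1 - qq E) + qq E)/(qq E)^2) * (qq E / E)^2
              - (Real.log (1 - qq E)/(qq E)) * (qq E/E)^2
              + uu E / E )) * (Real.log E)⁻¹)
      (𝓝[>] 0) (𝓝 1) := by
    have hS : Tendsto
        (fun E : ℝ => (1 - uu E) * (Real.log (1 - uu E) / uu E) * (uu E / E)
          + ( ((Real.log (1 - qq E) + qq E)/(qq E)^2) * (qq E / E)^2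
              - (Real.log (1 - qq E)/(qq E)) * (qq E/E)^2
              + uu E / E )) (𝓝[>] 0)
        (𝓝 ((1 - 0) * (-1) * 1 + ((-(1/2)) * 1^2 - (-1) * 1^2 + 1))) := by
      exact (((tendsto_const_nhds.sub L_u0).mul (L_log1 hw_uu)).mul L_uE).add
        ((((L_log2 hw_qq).mul (L_qE.pow 2)).sub ((L_log1 hw_qq).mul (L_qE.pow 2))).add L_uE)
    have := L_uE.sub (hS.mul L_inv_log)
    norm_num at this
    exact this
  apply hG.congr'
  filter_upwards [mem_Ioo_ev] with E hE
  obtain ⟨h1, h4⟩ := hE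
  have hEne : E ≠ 0 := ne_of_gt h1
  have hlogne : Real.log E ≠ 0 := by
    have : Real.log E < 0 := Real.log_neg h1 (by linarith)
    linarith
  have hupos := uu_pos h1
  have hune : uu E ≠ 0 := ne_of_gt hupos
  have huu1 : uu E < 1 := by nlinarith [uu_le h1 h4]
  have hqpos := qq_pos h1
  have hqne : qq E ≠ 0 := ne_of_gt hqpos
  have hq1 : qq E < 1 := by have := qq_le h1; linarith
  -- rewrite binEntropy
  have hbe : Real.binEntropy ((1 + Real.exp (-(2 * E))) / 2)
      = -(qq E * Real.log (qq E)) - (1 - qq E) * Real.log (1 - qq E) := by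
    have h15 : (1 + Real.exp (-(2 * E))) / 2 = 1 - qq E := by unfold qq; ring
    rw [h15, Real.binEntropy_one_sub, Real.binEntropy, Real.log_inv, Real.log_inv]
    ring
  have hlogq : Real.log (qq E) = Real.log E + Real.log (1 - uu E) := by
    rw [qq_eq hEne, Real.log_mul hEne (by linarith)]
  rw [hbe, hlogq]
  exact key_identity E (Real.log E) (Real.log (1 - uu E)) (Real.log (1 - qq E))
    (uu E) (qq E) hEne hlogne hune hqne (qq_eq hEne)
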